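/- The intersection of the parabola 𝒫 and the circle 𝒞 consists of exactly two points, namely T₁ = (−2√3·s, 2s) and T₂ = (2√3·s, 2s). Equivalently, {(x,y) ∈ ℝ² : x² = 4sy + 4s² and x² + y² − y/cos(2π/9) = 0} = {(−2√3·s, 2s), (2√3·s, 2s)}. -/

import Mathlib

/- STATEMENT 14: The intersection of the parabola 𝒫 = {(x,y) : x² = 4sy + 4s²} and the
circle 𝒞 through D₋₁, D₋₃, O (with equation x² + y² − y/cos(2π/9) = 0) consists of
exactly two points T₁ = (−2√3·s, 2s) and T₂ = (2√3·s, 2s):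
{(x,y) : x² = 4sy + 4s² ∧ x² + y² − y/cos(2π/9) = 0} = {T₁, T₂}, and T₁ ≠ T₂. -/

open Real

noncomputable section

abbrev Pt := EuclideanSpace ℝ (Fin 2)

def pt (x y : ℝ) : Pt := (WithLp.equiv 2 _).symm ![x, y]

/-- The constant s = sin(π/18)·cos(π/9). -/
def s : ℝ := Real.sin (π / 18) * Real.cos (π / 9)

/-- The parabola x² = 4sy + 4s², with focus the origin and directrix y = −2s. -/
def parab : Set Pt := {p : Pt | (p 0) ^ 2 = 4 * s * (p 1) + 4 * s ^ 2}

/-- The circle through D₋₁, D₋₃ and the origin, via its equation. -/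
def circC : Set Pt :=
  {p : Pt | (p 0) ^ 2 + (p 1) ^ 2 - (p 1) / Real.cos (2 * π / 9) = 0}

/-- The first tangency point T₁ = (−2√3·s, 2s). -/
def T₁ : Pt := pt (-(2 * Real.sqrt 3 * s)) (2 * s)

/-- The second tangency point T₂ = (2√3·s, 2s). -/
def T₂ : Pt := pt (2 * Real.sqrt 3 * s) (2 * s)

lemma s_pos : 0 < s := by
  have h1 : 0 < Real.sin (π / 18) :=
    Real.sin_pos_of_pos_of_lt_pi (by positivity) (by nlinarith [Real.pi_pos])
  have h2 : 0 < Real.cos (π / 9) := by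
    apply Real.cos_pos_of_mem_Ioo
    constructor <;> nlinarith [Real.pi_pos]
  exact mul_pos h1 h2

lemma key : 8 * s * Real.cos (2 * π / 9) = 1 := by
  have hs : Real.sin (π / 9) ≠ 0 := by
    have := Real.sin_pos_of_pos_of_lt_pi (x := π / 9) (by positivity)
      (by nlinarith [Real.pi_pos])
    linarith
  have h1 : Real.sin (π / 18) = Real.cos (4 * π / 9) := by
    rw [← Real.cos_pi_div_two_sub]; ring_nf
  have e1 : Real.sin (2 * π / 9) = 2 * Real.sin (π / 9) * Real.cos (π / 9) := by
    rw [show (2 * π / 9) = 2 * (π / 9) by ring, Real.sin_two_mul]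
  have e2 : Real.sin (4 * π / 9) = 2 * Real.sin (2 * π / 9) * Real.cos (2 * π / 9) := by
    rw [show (4 * π / 9) = 2 * (2 * π / 9) by ring, Real.sin_two_mul]
  have e3 : Real.sin (π / 9) = 2 * Real.sin (4 * π / 9) * Real.cos (4 * π / 9) := by
    rw [show (π / 9) = π - 8 * π / 9 by ring, Real.sin_pi_sub,
      show (8 * π / 9) = 2 * (4 * π / 9) by ring, Real.sin_two_mul]
  apply mul_right_cancel₀ hs
  rw [s, h1]
  linear_combination (-1 : ℝ) * e3 + (-2 * Real.cos (4 * π / 9)) * e2 +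
    (-4 * Real.cos (2 * π / 9) * Real.cos (4 * π / 9)) * e1

lemma cos_ne : Real.cos (2 * π / 9) ≠ 0 := by
  intro h
  have := key
  rw [h] at this
  norm_num at this

lemma pt_eq_iff (p : Pt) (x y : ℝ) : p = pt x y ↔ p 0 = x ∧ p 1 = y := by
  constructor
  · rintro rfl; simp [pt]
  · rintro ⟨h0, h1⟩
    ext i
    fin_cases i <;> simpa [pt]

theorem parabola_circle_tangency :
    parab ∩ circC = {T₁, T₂} ∧ T₁ ≠ T₂ := by
  have hs3 : Real.sqrt 3 ^ 2 = 3 := Real.sq_sqrt (by norm_num)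
  constructor
  · ext p
    simp only [parab, circC, Set.mem_inter_iff, Set.mem_setOf_eq, Set.mem_insert_iff,
      Set.mem_singleton_iff]
    constructor
    · rintro ⟨hp, hc⟩
      have hdiv : p 1 / Real.cos (2 * π / 9) = 8 * s * p 1 := by
        rw [div_eq_iff cos_ne]
        linear_combination (-(p 1)) * key
      rw [hdiv] at hc
      have hy : p 1 = 2 * s := by nlinarith [sq_nonneg (p 1 - 2 * s)]
      have hx : (p 0 - 2 * Real.sqrt 3 * s) * (p 0 + 2 * Real.sqrt 3 * s) = 0 := by
        linear_combination hp + 4 * s * hy - 4 * s ^ 2 * hs3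
      rcases mul_eq_zero.1 hx with h | h
      · right; rw [T₂, pt_eq_iff]; constructor <;> linarith
      · left; rw [T₁, pt_eq_iff]; constructor <;> linarith
    · rintro (rfl | rfl) <;>
      · constructor <;>
        · simp only [T₁, T₂, pt, WithLp.equiv_symm_apply, PiLp.toLp_apply, Matrix.cons_val_zero,
            Matrix.cons_val_one, Matrix.head_cons]
          try rw [sub_eq_zero, eq_div_iff cos_ne]
          first
          | linear_combination 4 * s ^ 2 * hs3
          | linear_combination 2 * s * key + 4 * s ^ 2 * Real.cos (2 * π / 9) * hs3
  · intro h
    rw [T₁, T₂, pt_eq_iff] at h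
    simp only [pt] at h
    have h0 := h.1
    simp only [WithLp.equiv_symm_apply, PiLp.toLp_apply, Matrix.cons_val_zero] at h0
    have hs := s_pos
    have h3 : Real.sqrt 3 > 0 := by positivity
    nlinarith [h0]
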